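/- Let K be a number field, m a positive integer, γ ∈ K*, and L = K(γ^{1/m}) for some m-th root γ^{1/m} of γ. Let p be a nonzero prime ideal of O_K with ord_p(m) = 0 and ord_p(γ) ≡ 0 (mod m). Then L/K is unramified at p, i.e. ord_p(d_{L/K}) = 0. -/

import Mathlib

open Polynomial NumberField IsDedekindDomain
open scoped nonZeroDivisors Classical

noncomputable section

namespace Paper

variable (F : Type*) [Field F] [NumberField F]

/-- The finite places (prime ideals) of a number field. -/
abbrev FinPlace := IsDedekindDomain.HeightOneSpectrum (𝓞 F)

/-- The set of places of a number field: infinite places plus finite places. -/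
abbrev Place := NumberField.InfinitePlace F ⊕ FinPlace F

/-- The absolute norm of a finite place. -/
def finNorm (v : FinPlace F) : ℕ := Ideal.absNorm v.asIdeal

variable {F} in
/-- `ord_p(x)` for `x ∈ F`, with junk value `0` at `x = 0`. -/
def finOrd (v : FinPlace F) (x : F) : ℤ :=
  if hx : x = 0 then 0
  else - Multiplicative.toAdd (WithZero.unzero (((v.valuation F).ne_zero_iff).mpr hx))

variable {F} in
/-- The normalized absolute value attached to a place. -/
def placeAbs : Place F → F → ℝ
  | Sum.inl w, x => (w x) ^ w.mult
  | Sum.inr v, x => if x = 0 then 0 else (finNorm F v : ℝ) ^ (-(finOrd v x))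

variable {F} in
/-- The absolute logarithmic (Weil) height of an element of a number field. -/
def logHeight (x : F) : ℝ :=
  (Module.finrank ℚ F : ℝ)⁻¹ * ∑ᶠ v : Place F, Real.log (max 1 (placeAbs v x))

variable {F} in
/-- The logarithmic height of a finite family. -/
def famHeight {ι : Type*} [Fintype ι] (u : ι → F) : ℝ :=
  (Module.finrank ℚ F : ℝ)⁻¹ *
    ∑ᶠ v : Place F, Real.log (max 1 (⨆ i, placeAbs v (u i)))

variable {F} in
/-- The logarithmic height of a polynomial. -/
def polyHeight (f : F[X]) : ℝ :=
  famHeight (fun i : Fin (f.natDegree + 1) => f.coeff i)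

variable {F} in
/-- The discriminant of a polynomial, computed in the algebraic closure:
`D(f) = (-1)^(n(n-1)/2) a₀^(n-2) ∏ᵢ f'(αᵢ)`. -/
def polyDiscA (f : F[X]) : AlgebraicClosure F :=
  (-1) ^ (f.natDegree * (f.natDegree - 1) / 2) *
    algebraMap F (AlgebraicClosure F) f.leadingCoeff ^ (f.natDegree - 2) *
    ((f.aroots (AlgebraicClosure F)).map fun r => Polynomial.aeval r (derivative f)).prod

variable {F} in
/-- The discriminant of a polynomial, as an element of the base field. -/
def polyDisc (f : F[X]) : F :=
  if h : ∃ c : F, algebraMap F (AlgebraicClosure F) c = polyDiscA f then h.choose else 0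

/-- `|D_F|`, the absolute value of the discriminant, as a real number. -/
def absDisc : ℝ := |(NumberField.discr F : ℝ)|

variable {F} in
/-- `Q_S`: product of the norms of the prime ideals in `S`. -/
def QS (T : Finset (FinPlace F)) : ℕ := ∏ v ∈ T, finNorm F v

variable {F} in
/-- `P_S`: maximum of the norms of the prime ideals in `S` (`1` if there are none). -/
def PS (T : Finset (FinPlace F)) : ℕ := max 1 (T.sup (finNorm F))

variable {F} in
/-- `s = #S`: the number of infinite places plus the number of primes in `S`. -/
def sCard (T : Finset (FinPlace F)) : ℕ := Fintype.card (NumberField.InfinitePlace F) + T.card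

variable {F} in
/-- The order of the subgroup of the class group generated by the classes of primes in `S`. -/
def hS (T : Finset (FinPlace F)) : ℕ :=
  Nat.card (Subgroup.closure
    {c : ClassGroup (𝓞 F) | ∃ v ∈ T,
      c = ClassGroup.mk0 ⟨v.asIdeal, mem_nonZeroDivisors_of_ne_zero v.ne_bot⟩})

variable {F} in
/-- The `S`-regulator `R_S = h_S · R_K · ∏ log N(p)`. -/
def RS (T : Finset (FinPlace F)) : ℝ :=
  (hS T : ℝ) * NumberField.Units.regulator F * ∏ v ∈ T, Real.log (finNorm F v)

/-- `log* x = max (1, log x)`. -/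
def logStar (x : ℝ) : ℝ := max 1 (Real.log x)

variable (L : Type*) [Field L] [NumberField L] [Algebra F L]

/-- The relative discriminant ideal of an extension of number fields: the ideal of `O_K`
generated by the discriminants of all `[L:K]`-tuples of integers of `L`. -/
def relDiscr : Ideal (𝓞 F) :=
  Ideal.span {x : 𝓞 F | ∃ ω : Fin (Module.finrank F L) → 𝓞 L,
    algebraMap (𝓞 F) F x = Algebra.discr F fun i => (algebraMap (𝓞 L) L (ω i))}

variable {F L} in
/-- A prime of `L` lies above a prime of `K`. -/
def LiesAbove (w : FinPlace L) (v : FinPlace F) : Prop :=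
  v.asIdeal = Ideal.comap (algebraMap (𝓞 F) (𝓞 L)) w.asIdeal

variable {F} in
/-- `ord_p(I)` of a nonzero ideal: the exponent of `p` in the prime factorization. -/
def ordIdl (v : FinPlace F) (I : Ideal (𝓞 F)) : ℕ :=
  Multiset.count v.asIdeal (UniqueFactorizationMonoid.normalizedFactors I)

/-- `u(n) = lcm(1, …, n)`. -/
def un (n : ℕ) : ℕ := (Finset.Icc 1 n).lcm id

end Paper

open Paper Polynomial NumberField IntermediateField
open scoped Classical

noncomputable section


namespace Lem34
open Paper UniqueFactorizationMonoid
variable {K : Type*} [Field K] [NumberField K]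

/-- `ord_p(a)` for an algebraic integer, via factor counts. -/
def ordE (v : FinPlace K) (a : 𝓞 K) : ℕ :=
  Multiset.count v.asIdeal (normalizedFactors (Ideal.span {a}))

variable (v : FinPlace K)

lemma span_ne_zero {a : 𝓞 K} (ha : a ≠ 0) : (Ideal.span {a} : Ideal (𝓞 K)) ≠ 0 := by
  simpa [Ideal.span_singleton_eq_bot] using ha

lemma prime_asIdeal : Prime v.asIdeal := Ideal.prime_of_isPrime v.ne_bot v.isPrime

lemma pow_dvd_iff {I : Ideal (𝓞 K)} (hI : I ≠ 0) (n : ℕ) :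
    v.asIdeal ^ n ∣ I ↔ n ≤ Multiset.count v.asIdeal (normalizedFactors I) := by
  rw [pow_dvd_iff_le_emultiplicity,
    emultiplicity_eq_count_normalizedFactors (prime_asIdeal v).irreducible hI, normalize_eq,
    Nat.cast_le]

lemma pow_dvd_span_iff {a : 𝓞 K} (ha : a ≠ 0) (n : ℕ) :
    v.asIdeal ^ n ∣ Ideal.span {a} ↔ n ≤ ordE v a :=
  pow_dvd_iff v (span_ne_zero ha) n

lemma ordE_eq_zero_iff {a : 𝓞 K} (ha : a ≠ 0) : ordE v a = 0 ↔ a ∉ v.asIdeal := by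
  rw [ordE, Multiset.count_eq_zero]
  rw [mem_normalizedFactors_iff (span_ne_zero ha)]
  simp [prime_asIdeal v, Ideal.dvd_span_singleton]

lemma ordE_mul {a b : 𝓞 K} (ha : a ≠ 0) (hb : b ≠ 0) :
    ordE v (a * b) = ordE v a + ordE v b := by
  rw [ordE, ordE, ordE, ← Ideal.span_singleton_mul_span_singleton,
    normalizedFactors_mul (span_ne_zero ha) (span_ne_zero hb), Multiset.count_add]

lemma ordE_pow {a : 𝓞 K} (ha : a ≠ 0) (n : ℕ) : ordE v (a ^ n) = n * ordE v a := by
  induction n with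
  | zero =>
      rw [pow_zero, ordE, Ideal.span_singleton_one, ← Ideal.one_eq_top, normalizedFactors_one]
      simp
  | succ k ih =>
      rw [pow_succ, ordE_mul v (pow_ne_zero _ ha) ha, ih]; ring

lemma finOrd_algebraMap {a : 𝓞 K} (ha : a ≠ 0) :
    finOrd v (algebraMap (𝓞 K) K a) = ordE v a := by
  have h0 : algebraMap (𝓞 K) K a ≠ 0 := by
    simpa using (map_ne_zero_iff _ (IsFractionRing.injective (𝓞 K) K)).mpr ha
  have hval : v.valuation K (algebraMap (𝓞 K) K a)
      = ((Multiplicative.ofAdd (-(ordE v a : ℤ)) : Multiplicative ℤ) : WithZero (Multiplicative ℤ)) := by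
    rw [IsDedekindDomain.HeightOneSpectrum.valuation_of_algebraMap]
    have hdef : v.intValuation a = v.intValuationDef a := rfl
    rw [hdef, v.intValuationDef_if_neg ha, WithZero.exp]
    congr 2
    rw [count_associates_factors_eq (span_ne_zero ha) v.isPrime v.ne_bot]
    rfl
  simp only [finOrd, dif_neg h0]
  have h1 : WithZero.unzero (((v.valuation K).ne_zero_iff).mpr h0)
      = Multiplicative.ofAdd (-(ordE v a : ℤ)) := by
    rw [← WithZero.coe_inj, WithZero.coe_unzero, hval]
  rw [h1, toAdd_ofAdd, neg_neg]

lemma finOrd_mul {x y : K} (hx : x ≠ 0) (hy : y ≠ 0) :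
    finOrd v (x * y) = finOrd v x + finOrd v y := by
  simp only [finOrd, dif_neg hx, dif_neg hy, dif_neg (mul_ne_zero hx hy)]
  have h1 : WithZero.unzero (((v.valuation K).ne_zero_iff).mpr (mul_ne_zero hx hy))
      = WithZero.unzero (((v.valuation K).ne_zero_iff).mpr hx)
        * WithZero.unzero (((v.valuation K).ne_zero_iff).mpr hy) := by
    rw [← WithZero.coe_inj, WithZero.coe_mul, WithZero.coe_unzero, WithZero.coe_unzero,
      WithZero.coe_unzero, map_mul]
  rw [h1, toAdd_mul]; ring

end Lem34

open Lem34 UniqueFactorizationMonoid in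
/-- Lemma 3.4: if `L = K(γ^{1/m})`, `p ∤ m`, and `ord_p(γ) ≡ 0 (mod m)`, then `L/K` is
unramified at `p`, i.e. `ord_p(d_{L/K}) = 0`. -/
theorem relDiscr_unramified_of_radical
    (K L : Type*) [Field K] [NumberField K] [Field L] [NumberField L] [Algebra K L]
    (m : ℕ) (hm : 0 < m)
    (γ : K) (hγ : γ ≠ 0)
    (t : L) (ht : t ^ m = algebraMap K L γ)
    (hgen : IntermediateField.adjoin K {t} = ⊤)
    (v : FinPlace K)
    (hvm : ordIdl v (Ideal.span {(m : 𝓞 K)}) = 0)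
    (hvγ : (m : ℤ) ∣ finOrd v γ) :
    ordIdl v (relDiscr K L) = 0 := by
  classical
  haveI hPrime : v.asIdeal.IsPrime := v.isPrime
  -- `m` is a unit at `p`
  have hm0 : ((m : 𝓞 K)) ≠ 0 := Nat.cast_ne_zero.mpr hm.ne'
  have hmnp : (m : 𝓞 K) ∉ v.asIdeal := (ordE_eq_zero_iff v hm0).mp hvm
  -- write `γ = a / b`
  obtain ⟨a, b, hbmem, hab⟩ := IsFractionRing.div_surjective (A := 𝓞 K) γ
  have hb0 : b ≠ 0 := nonZeroDivisors.ne_zero hbmem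
  have hbK0 : algebraMap (𝓞 K) K b ≠ 0 := by
    simpa using (map_ne_zero_iff _ (IsFractionRing.injective (𝓞 K) K)).mpr hb0
  have ha0 : a ≠ 0 := by
    rintro rfl
    apply hγ
    rw [← hab]; simp
  have haK0 : algebraMap (𝓞 K) K a ≠ 0 := by
    simpa using (map_ne_zero_iff _ (IsFractionRing.injective (𝓞 K) K)).mpr ha0
  -- the integer `γ₀ = a * b^(m-1) = γ * b^m`
  set γ₀ : 𝓞 K := a * b ^ (m - 1) with hγ₀def
  have hγ₀0 : γ₀ ≠ 0 := mul_ne_zero ha0 (pow_ne_zero _ hb0)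
  have hγ₀K : algebraMap (𝓞 K) K γ₀ = γ * (algebraMap (𝓞 K) K b) ^ m := by
    rw [← hab]
    rw [hγ₀def]
    push_cast [map_mul, map_pow]
    rw [div_mul_eq_mul_div, eq_div_iff hbK0, mul_assoc, ← pow_succ, Nat.sub_add_cancel hm]
  -- `m ∣ ordE v γ₀`
  have hordγ₀ : m ∣ ordE v γ₀ := by
    have h1 : finOrd v γ + (ordE v b : ℤ) = (ordE v a : ℤ) := by
      have : γ * algebraMap (𝓞 K) K b = algebraMap (𝓞 K) K a := by
        rw [← hab]; field_simp
      have h2 := finOrd_mul v (x := γ) (y := algebraMap (𝓞 K) K b) hγ hbK0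
      rw [this, finOrd_algebraMap v ha0, finOrd_algebraMap v hb0] at h2
      omega
    have h3 : ordE v γ₀ = ordE v a + (m - 1) * ordE v b := by
      rw [hγ₀def, ordE_mul v ha0 (pow_ne_zero _ hb0), ordE_pow v hb0]
    have h4 : (ordE v γ₀ : ℤ) = finOrd v γ + (m : ℤ) * (ordE v b : ℤ) := by
      push_cast [h3]
      have hmc : ((m : ℤ) - 1) = ((m - 1 : ℕ) : ℤ) := by
        have := hm; push_cast [Nat.cast_sub hm]; ring
      rw [← h1]; rw [← hmc]; ring
    have h5 : (m : ℤ) ∣ (ordE v γ₀ : ℤ) := by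
      rw [h4]; exact dvd_add hvγ ⟨(ordE v b : ℤ), rfl⟩
    exact_mod_cast h5
  set e : ℕ := ordE v γ₀ / m with he
  have hme : m * e = ordE v γ₀ := Nat.mul_div_cancel' hordγ₀
  -- factor out the p-part of `(γ₀)`
  obtain ⟨C, hC⟩ : v.asIdeal ^ (m * e) ∣ Ideal.span {γ₀} :=
    (pow_dvd_span_iff v hγ₀0 _).mpr (le_of_eq hme)
  have hspanγ₀ : (Ideal.span {γ₀} : Ideal (𝓞 K)) ≠ 0 := span_ne_zero hγ₀0
  have hC0 : C ≠ 0 := by rintro rfl; simp [hC] at hspanγ₀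
  have hpC : ¬ v.asIdeal ∣ C := by
    rintro ⟨C', rfl⟩
    have : v.asIdeal ^ (m * e + 1) ∣ Ideal.span {γ₀} := ⟨C', by rw [hC]; ring⟩
    have := (pow_dvd_span_iff v hγ₀0 _).mp this
    omega
  -- choose `z` with `ord_p z = e`
  obtain ⟨z, hze, hzne⟩ : ∃ z, z ∈ v.asIdeal ^ e ∧ z ∉ v.asIdeal ^ (e + 1) := by
    obtain ⟨z, hz1, hz2⟩ := SetLike.exists_of_lt (Ideal.pow_succ_lt_pow v.ne_bot e)
    exact ⟨z, hz1, hz2⟩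
  have hz0 : z ≠ 0 := by rintro rfl; exact hzne (zero_mem _)
  obtain ⟨Z, hZ⟩ : v.asIdeal ^ e ∣ Ideal.span {z} := Ideal.dvd_span_singleton.mpr hze
  have hspanz : (Ideal.span {z} : Ideal (𝓞 K)) ≠ 0 := span_ne_zero hz0
  have hZ0 : Z ≠ 0 := by rintro rfl; simp [hZ] at hspanz
  have hpZ : ¬ v.asIdeal ∣ Z := by
    rintro ⟨Z', rfl⟩
    exact hzne (Ideal.dvd_span_singleton.mp ⟨Z', by rw [hZ]; ring⟩)
  -- choose `y ∈ Z` with `ord_p y = 0`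
  obtain ⟨y, hyZ, hyp⟩ : ∃ y, y ∈ Z ∧ y ∉ Z * v.asIdeal := by
    have hne : Z * v.asIdeal ≠ Z := by
      intro h
      have : v.asIdeal = 1 := by
        apply mul_left_cancel₀ hZ0
        rw [h, mul_one]
      exact hPrime.ne_top (by simpa [Ideal.one_eq_top] using this)
    obtain ⟨y, h1, h2⟩ := SetLike.exists_of_lt (lt_of_le_of_ne Ideal.mul_le_left hne)
    exact ⟨y, h1, h2⟩
  have hy0 : y ≠ 0 := by rintro rfl; exact hyp (zero_mem _)
  obtain ⟨W, hW⟩ : Z ∣ Ideal.span {y} := Ideal.dvd_span_singleton.mpr hyZ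
  have hspany : (Ideal.span {y} : Ideal (𝓞 K)) ≠ 0 := span_ne_zero hy0
  have hW0 : W ≠ 0 := by rintro rfl; simp [hW] at hspany
  have hpW : ¬ v.asIdeal ∣ W := by
    rintro ⟨W', rfl⟩
    exact hyp (Ideal.dvd_span_singleton.mp ⟨W', by rw [hW]; ring⟩)
  -- `δ := γ₀ y^m / z^m` is an integer which is a unit at `p`
  have hdvdzy : z ^ m ∣ γ₀ * y ^ m := by
    rw [← Ideal.span_singleton_le_span_singleton]
    apply Ideal.le_of_dvd
    refine ⟨C * W ^ m, ?_⟩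
    rw [← Ideal.span_singleton_mul_span_singleton, ← Ideal.span_singleton_pow,
      ← Ideal.span_singleton_pow, hC, hZ, hW]
    ring
  obtain ⟨δ, hδ⟩ := hdvdzy
  have hδ0 : δ ≠ 0 := by
    rintro rfl
    rw [mul_zero] at hδ
    exact (mul_ne_zero hγ₀0 (pow_ne_zero _ hy0)) hδ
  have hδspan : Ideal.span {δ} = C * W ^ m := by
    have hA0 : (v.asIdeal ^ (m * e) * Z ^ m : Ideal (𝓞 K)) ≠ 0 :=
      mul_ne_zero (pow_ne_zero _ (by simpa using v.ne_bot)) (pow_ne_zero _ hZ0)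
    apply mul_left_cancel₀ hA0
    have h1 : Ideal.span {γ₀ * y ^ m} = Ideal.span {z ^ m} * Ideal.span {δ} := by
      rw [hδ, Ideal.span_singleton_mul_span_singleton]
    rw [← Ideal.span_singleton_mul_span_singleton, ← Ideal.span_singleton_pow, hC, hW,
      ← Ideal.span_singleton_pow, hZ] at h1
    calc v.asIdeal ^ (m * e) * Z ^ m * Ideal.span {δ}
        = (v.asIdeal ^ e * Z) ^ m * Ideal.span {δ} := by ring
      _ = v.asIdeal ^ (m * e) * C * (Z * W) ^ m := h1.symm
      _ = v.asIdeal ^ (m * e) * Z ^ m * (C * W ^ m) := by ring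
  have hδp : δ ∉ v.asIdeal := by
    intro hmem
    have : v.asIdeal ∣ C * W ^ m := hδspan ▸ Ideal.dvd_span_singleton.mpr hmem
    rcases (prime_asIdeal v).dvd_mul.mp this with h | h
    · exact hpC h
    · exact hpW ((prime_asIdeal v).dvd_of_dvd_pow h)
  -- define `β = c • t` with `β^m = δ`
  have hinj := IsFractionRing.injective (𝓞 K) K
  have hzK0 : algebraMap (𝓞 K) K z ≠ 0 := by
    simpa using (map_ne_zero_iff _ hinj).mpr hz0
  have hyK0 : algebraMap (𝓞 K) K y ≠ 0 := by
    simpa using (map_ne_zero_iff _ hinj).mpr hy0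
  set c : K := algebraMap (𝓞 K) K b * algebraMap (𝓞 K) K y / algebraMap (𝓞 K) K z with hcdef
  have hc0 : c ≠ 0 := div_ne_zero (mul_ne_zero hbK0 hyK0) hzK0
  have hδK : algebraMap (𝓞 K) K δ = c ^ m * γ := by
    have h2 : algebraMap (𝓞 K) K γ₀ * (algebraMap (𝓞 K) K y) ^ m
        = (algebraMap (𝓞 K) K z) ^ m * algebraMap (𝓞 K) K δ := by
      rw [← map_pow, ← map_pow, ← map_mul, ← map_mul, hδ]
    rw [hγ₀K] at h2
    have hzm : (algebraMap (𝓞 K) K z) ^ m ≠ 0 := pow_ne_zero _ hzK0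
    rw [hcdef, div_pow, mul_pow, div_mul_eq_mul_div, eq_comm, div_eq_iff hzm]
    linear_combination h2
  set β : L := algebraMap K L c * t with hβdef
  have hβm : β ^ m = algebraMap K L (algebraMap (𝓞 K) K δ) := by
    rw [hβdef, mul_pow, ← map_pow, ht, ← map_mul, hδK]
  have hβint : IsIntegral (𝓞 K) β := by
    refine ⟨X ^ m - Polynomial.C δ, monic_X_pow_sub_C δ hm.ne', ?_⟩
    have hmapδ : (algebraMap (𝓞 K) L) δ = algebraMap K L (algebraMap (𝓞 K) K δ) :=
      IsScalarTower.algebraMap_apply (𝓞 K) K L δ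
    simp only [eval₂_sub, eval₂_X_pow, eval₂_C]
    rw [← hmapδ] at hβm
    rw [hβm, sub_self]
  have hβintZ : IsIntegral ℤ β := isIntegral_trans (R := ℤ) (A := 𝓞 K) β hβint
  set Bi : 𝓞 L := ⟨β, hβintZ⟩ with hBidef
  have hBiL : algebraMap (𝓞 L) L Bi = β := rfl
  -- `β` generates `L` over `K`
  have hcL0 : algebraMap K L c ≠ 0 := by
    simpa using (map_ne_zero_iff _ (algebraMap K L).injective).mpr hc0
  have hadj : IntermediateField.adjoin K {β} = ⊤ := by
    rw [eq_top_iff, ← hgen]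
    refine IntermediateField.adjoin_le_iff.mpr ?_
    rw [Set.singleton_subset_iff]
    show t ∈ IntermediateField.adjoin K {β}
    have htβ : t = algebraMap K L c⁻¹ * β := by
      rw [map_inv₀, hβdef, inv_mul_cancel_left₀ hcL0]
    rw [htβ]
    exact mul_mem (IntermediateField.algebraMap_mem _ _)
      (IntermediateField.mem_adjoin_simple_self K β)
  -- power basis generated by `β`
  have hβKint : IsIntegral K β := IsIntegral.of_finite K β
  set pb : PowerBasis K L :=
    (IntermediateField.adjoin.powerBasis hβKint).map
      ((IntermediateField.equivOfEq hadj).trans IntermediateField.topEquiv) with hpbdef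
  have hgenpb : pb.gen = β := rfl
  -- the minimal polynomial of `β` over `𝓞 K` and the cofactor `g`
  set f : (𝓞 K)[X] := minpoly (𝓞 K) β with hfdef
  have hfmap : minpoly K β = f.map (algebraMap (𝓞 K) K) :=
    minpoly.isIntegrallyClosed_eq_field_fractions' K hβint
  have hfdvd : f ∣ X ^ m - Polynomial.C δ := by
    refine minpoly.isIntegrallyClosed_dvd hβint ?_
    have hmapδ : (algebraMap (𝓞 K) L) δ = algebraMap K L (algebraMap (𝓞 K) K δ) :=
      IsScalarTower.algebraMap_apply (𝓞 K) K L δ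
    rw [map_sub, map_pow, aeval_X, aeval_C, hβm, hmapδ, sub_self]
  obtain ⟨g, hg⟩ := hfdvd
  have heval : (m : L) * β ^ (m - 1) = aeval β (derivative f) * aeval β g := by
    have hdg := congrArg derivative hg
    rw [derivative_sub, derivative_X_pow, derivative_C, sub_zero, derivative_mul] at hdg
    have h3 := congrArg (aeval β) hdg
    simp only [map_add, map_mul, map_pow, aeval_X, aeval_C, map_natCast] at h3
    rw [minpoly.aeval] at h3
    rw [zero_mul, add_zero] at h3
    exact h3
  -- norms
  set n : ℕ := Module.finrank K L with hn
  have hnpos : 0 < n := Module.finrank_pos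
  have haevalInt : ∀ q : (𝓞 K)[X], IsIntegral (𝓞 K) (aeval β q) := fun q =>
    IsIntegral.of_mem_of_fg _ hβint.fg_adjoin_singleton _ (aeval_mem_adjoin_singleton _ _)
  obtain ⟨NF, hNF⟩ := IsIntegrallyClosed.isIntegral_iff.mp
    (Algebra.isIntegral_norm K (haevalInt (derivative f)))
  obtain ⟨NG, hNG⟩ := IsIntegrallyClosed.isIntegral_iff.mp
    (Algebra.isIntegral_norm K (haevalInt g))
  obtain ⟨Nβ, hNβ⟩ := IsIntegrallyClosed.isIntegral_iff.mp
    (Algebra.isIntegral_norm K hβint)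
  have hprod : NF * NG = (m : 𝓞 K) ^ n * Nβ ^ (m - 1) := by
    apply hinj
    rw [map_mul, map_mul, map_pow, map_pow, hNF, hNG, hNβ]
    rw [← map_mul (Algebra.norm (S := L) K), ← heval]
    rw [map_mul (Algebra.norm (S := L) K), map_pow (Algebra.norm (S := L) K)]
    have hmL : (m : L) = algebraMap K L (m : K) := by rw [map_natCast]
    rw [hmL, Algebra.norm_algebraMap, map_natCast]
  have hNβpow : Nβ ^ m = δ ^ n := by
    apply hinj
    rw [map_pow, hNβ, ← map_pow (Algebra.norm (S := L) K), hβm, Algebra.norm_algebraMap,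
      map_pow]
  have hNβp : Nβ ∉ v.asIdeal := by
    intro hmem
    refine hδp (hPrime.mem_of_pow_mem n ?_)
    rw [← hNβpow]
    exact Ideal.pow_mem_of_mem _ hmem m hm
  have hNFp : NF ∉ v.asIdeal := by
    intro hmem
    have hmul : NF * NG ∈ v.asIdeal := Ideal.mul_mem_right _ _ hmem
    rw [hprod] at hmul
    rcases hPrime.mem_or_mem hmul with h | h
    · exact hmnp (hPrime.mem_of_pow_mem _ h)
    · exact hNβp (hPrime.mem_of_pow_mem _ h)
  -- the discriminant element
  set x : 𝓞 K := (-1) ^ (n * (n - 1) / 2) * NF with hxdef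
  have hxp : x ∉ v.asIdeal := by
    intro hmem
    apply hNFp
    have h1 : ((-1 : 𝓞 K)) ^ (n * (n - 1) / 2) * x ∈ v.asIdeal := Ideal.mul_mem_left _ _ hmem
    rw [hxdef, ← mul_assoc, ← pow_add] at h1
    rw [Even.neg_one_pow ⟨_, rfl⟩, one_mul] at h1
    exact h1
  have hx0 : x ≠ 0 := by
    intro h
    exact hxp (h ▸ zero_mem _)
  have hdim : pb.dim = n := (PowerBasis.finrank pb).symm
  have hdiscr : algebraMap (𝓞 K) K x
      = Algebra.discr K (fun i : Fin n => algebraMap (𝓞 L) L (Bi ^ (i : ℕ))) := by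
    have hre : Algebra.discr K (⇑pb.basis ∘ ⇑(finCongr hdim).symm) = Algebra.discr K pb.basis :=
      Algebra.discr_reindex K pb.basis (finCongr hdim)
    have hfun : (fun i : Fin n => algebraMap (𝓞 L) L (Bi ^ (i : ℕ)))
        = ⇑pb.basis ∘ ⇑(finCongr hdim).symm := by
      funext i
      simp only [Function.comp_apply, PowerBasis.coe_basis, finCongr_symm_apply, Fin.coe_cast]
      rw [map_pow, hBiL, hgenpb]
    rw [hfun, hre, Algebra.discr_powerBasis_eq_norm, hgenpb, hfmap, derivative_map,
      aeval_map_algebraMap, ← hn]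
    rw [hxdef, map_mul, map_pow, map_neg, map_one, hNF]
  -- conclusion
  have hxmem : x ∈ relDiscr K L := by
    apply Ideal.subset_span
    exact ⟨fun i : Fin (Module.finrank K L) => Bi ^ (i : ℕ), hdiscr⟩
  obtain ⟨J, hJ⟩ : relDiscr K L ∣ Ideal.span {x} :=
    Ideal.dvd_iff_le.mpr ((Ideal.span_singleton_le_iff_mem _).mpr hxmem)
  have hspanx : (Ideal.span {x} : Ideal (𝓞 K)) ≠ 0 := span_ne_zero hx0
  have hrel0 : relDiscr K L ≠ 0 := by
    rintro h
    rw [h, zero_mul] at hJ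
    exact hspanx hJ
  have hJ0 : J ≠ 0 := by
    rintro rfl
    rw [mul_zero] at hJ
    exact hspanx hJ
  have hcount : ordE v x = 0 := (ordE_eq_zero_iff v hx0).mpr hxp
  have hsum : ordE v x
      = ordIdl v (relDiscr K L) + Multiset.count v.asIdeal (normalizedFactors J) := by
    rw [ordE, ordIdl, hJ, normalizedFactors_mul hrel0 hJ0, Multiset.count_add]
  omega



end
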